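/- Let t ≥ 2 be an even integer and let p_1, …, p_t, q be distinct primes with p_i ≡ 5 (mod 8) for all i and q ≡ 3 (mod 8), and suppose the Legendre symbol (q/p_i) = 1 for all i; set P = p_1⋯p_t and let P = P_v · P_v′ be a factorization of P into coprime positive divisors. If there exist nonzero integers x, y, z, w with gcd(x, y) = 1 satisfying x² + qy² = P_v′ z² and x² − qy² = P_v w², then the Legendre symbol (y/P) = 1 and the quartic residue symbols satisfy (q/P)_4 = (−1/P_v)_4 · (x/P), where (x/P) denotes the Jacobi symbol and (−1/P_v)_4 = ∏_{p_i ∣ P_v} (−1)^{(p_i−1)/4}. -/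

import Mathlib

open Finset

/-- The quartic residue symbol `(a / p)₄ ∈ {±1}` for a prime `p ≡ 1 (mod 4)` and `a`
with `(a / p) = 1`: it is the sign determined by `(a / p)₄ ≡ a^((p-1)/4) (mod p)`. -/
noncomputable def quarticSym (a : ℤ) (p : ℕ) : ℤ :=
  if (a : ZMod p) ^ ((p - 1) / 4) = -1 then -1 else 1

lemma jacobi_prod {ι : Type*} (a : ℤ) (s : Finset ι) (f : ι → ℕ) (hf : ∀ i ∈ s, f i ≠ 0) :
    jacobiSym a (∏ i ∈ s, f i) = ∏ i ∈ s, jacobiSym a (f i) := by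
  induction s using Finset.cons_induction with
  | empty => simp
  | cons i s hi ih =>
    rw [Finset.prod_cons, Finset.prod_cons,
      jacobiSym.mul_right' a (hf i (Finset.mem_cons_self i s))
        (Finset.prod_ne_zero_iff.mpr fun j hj => hf j (Finset.mem_cons_of_mem hj)),
      ih fun j hj => hf j (Finset.mem_cons_of_mem hj)]

lemma quarticSym_eq {p : ℕ} (hp : p.Prime) (hodd : p ≠ 2) {a : ℤ} {e : ℤ}
    (he : e = 1 ∨ e = -1) (h : (a : ZMod p) ^ ((p - 1) / 4) = ((e : ℤ) : ZMod p)) :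
    quarticSym a p = e := by
  haveI := Fact.mk hp
  have h2 : 2 < p := lt_of_le_of_ne hp.two_le (Ne.symm hodd)
  haveI : Fact (2 < p) := Fact.mk h2
  have hne : (-1 : ZMod p) ≠ 1 := ZMod.neg_one_ne_one
  rcases he with rfl | rfl
  · push_cast at h
    rw [quarticSym, if_neg]
    rw [h]
    exact fun hc => hne hc.symm
  · push_cast at h
    rw [quarticSym, if_pos h]

lemma pow_quarter {p : ℕ} [hpf : Fact p.Prime] (h5 : p % 8 = 5) (a X Y : ℤ)
    (hY : ¬(p : ℤ) ∣ Y)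
    (h : ((X : ZMod p)) ^ 2 = (a : ZMod p) * (Y : ZMod p) ^ 2) :
    (a : ZMod p) ^ ((p - 1) / 4) =
      ((legendreSym p X * legendreSym p Y : ℤ) : ZMod p) := by
  have hp := hpf.out
  have hY0 : (Y : ZMod p) ≠ 0 := by
    rwa [Ne, ZMod.intCast_zmod_eq_zero_iff_dvd]
  have hn : p / 2 = 2 * ((p - 1) / 4) := by omega
  have hx : ((legendreSym p X : ℤ) : ZMod p) = (X : ZMod p) ^ (p / 2) :=
    legendreSym.eq_pow p X
  have hy : ((legendreSym p Y : ℤ) : ZMod p) = (Y : ZMod p) ^ (p / 2) :=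
    legendreSym.eq_pow p Y
  have hfermat : (Y : ZMod p) ^ (p - 1) = 1 := ZMod.pow_card_sub_one_eq_one hY0
  have hkey : (X : ZMod p) ^ (p / 2) = (a : ZMod p) ^ ((p - 1) / 4) * (Y : ZMod p) ^ (p / 2) := by
    rw [hn, pow_mul, pow_mul, h, mul_pow]
  push_cast
  rw [hx, hy, hkey, mul_assoc, ← pow_add]
  have : p / 2 + p / 2 = p - 1 := by omega
  rw [this, hfermat, mul_one]

/-- Let `t ≥ 2` be even and `p_1, …, p_t, q` distinct primes with `p_i ≡ 5 (mod 8)`,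
`q ≡ 3 (mod 8)` and `(q / p_i) = 1` for all `i`; set `P = p_1 ⋯ p_t` and let
`P = P_v · P_v'` be a factorization into coprime positive divisors, given by a set `S`
of indices (`P_v = ∏_{i ∈ S} p_i`, `P_v' = ∏_{i ∉ S} p_i`).  If there are nonzero
integers `x, y, z, w` with `gcd(x, y) = 1` satisfying `x² + q y² = P_v' z²` and
`x² − q y² = P_v w²`, then the Jacobi symbol `(y / P) = 1` and
`(q / P)₄ = (-1 / P_v)₄ · (x / P)` where `(-1 / P_v)₄ = ∏_{i ∈ S} (-1)^((p_i - 1)/4)`. -/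
theorem stmt15 (t : ℕ) (ht : Even t) (ht2 : 2 ≤ t)
    (p : Fin t → ℕ) (q : ℕ)
    (hp : ∀ i, (p i).Prime) (hq : q.Prime)
    (hinj : Function.Injective p) (hpq : ∀ i, p i ≠ q)
    (hp5 : ∀ i, p i % 8 = 5) (hq3 : q % 8 = 3)
    (hleg : ∀ i, jacobiSym q (p i) = 1)
    (S : Finset (Fin t))
    (x y z w : ℤ) (hx : x ≠ 0) (hy : y ≠ 0) (hz : z ≠ 0) (hw : w ≠ 0)
    (hgcd : Int.gcd x y = 1)
    (heq1 : x ^ 2 + (q : ℤ) * y ^ 2 = (∏ i ∈ Sᶜ, (p i : ℤ)) * z ^ 2)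
    (heq2 : x ^ 2 - (q : ℤ) * y ^ 2 = (∏ i ∈ S, (p i : ℤ)) * w ^ 2) :
    jacobiSym y (∏ i, p i) = 1 ∧
    (∏ i, quarticSym q (p i)) =
      (∏ i ∈ S, (-1 : ℤ) ^ ((p i - 1) / 4)) * jacobiSym x (∏ i, p i) := by
  have hpne : ∀ i, p i ≠ 0 := fun i => (hp i).pos.ne'
  have hpodd : ∀ i, p i % 2 = 1 := fun i => by have := hp5 i; omega
  have hp2' : ∀ i, p i ≠ 2 := fun i => by have := hp5 i; omega
  have hPodd : Odd (∏ i, p i) := by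
    rw [Nat.odd_iff, Finset.prod_nat_mod]
    simp [hpodd]
  have hP4 : (∏ i, p i) % 4 = 1 := by
    rw [Finset.prod_nat_mod]
    have : ∀ i, p i % 4 = 1 := fun i => by have := hp5 i; omega
    simp [this]
  -- the primes p i do not divide x nor y
  have hnd : ∀ i, ¬(p i : ℤ) ∣ x ∧ ¬(p i : ℤ) ∣ y := by
    intro i
    have hprime : Prime ((p i : ℕ) : ℤ) := Nat.prime_iff_prime_int.mp (hp i)
    have hdvd : (p i : ℤ) ∣ x ^ 2 - (q : ℤ) * y ^ 2 ∨ (p i : ℤ) ∣ x ^ 2 + (q : ℤ) * y ^ 2 := by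
      by_cases hiS : i ∈ S
      · left; rw [heq2]
        exact dvd_mul_of_dvd_left (Finset.dvd_prod_of_mem _ hiS) _
      · right; rw [heq1]
        exact dvd_mul_of_dvd_left (Finset.dvd_prod_of_mem _ (Finset.mem_compl.mpr hiS)) _
    have hgcd_contra : (p i : ℤ) ∣ x → (p i : ℤ) ∣ y → False := by
      intro h1 h2
      have h3 : (p i : ℤ) ∣ (Int.gcd x y : ℤ) := Int.dvd_coe_gcd h1 h2
      rw [hgcd] at h3
      have h4 : (p i : ℤ) ≤ 1 := Int.le_of_dvd one_pos h3
      have := (hp i).two_le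
      omega
    have hy' : ¬(p i : ℤ) ∣ y := by
      intro hy'
      have hy2 : (p i : ℤ) ∣ (q : ℤ) * y ^ 2 := Dvd.dvd.mul_left (dvd_pow hy' two_ne_zero) _
      have hx2 : (p i : ℤ) ∣ x ^ 2 := by
        rcases hdvd with h | h
        · have := dvd_add h hy2; simpa using this
        · have := dvd_sub h hy2; simpa using this
      exact hgcd_contra (hprime.dvd_of_dvd_pow hx2) hy'
    refine ⟨?_, hy'⟩
    intro hx'
    have hx2 : (p i : ℤ) ∣ x ^ 2 := dvd_pow hx' two_ne_zero
    have hqy2 : (p i : ℤ) ∣ (q : ℤ) * y ^ 2 := by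
      rcases hdvd with h | h
      · have := dvd_sub hx2 h; simpa using this
      · have := dvd_sub h hx2; simpa using this
    rcases hprime.dvd_mul.mp hqy2 with h | h
    · have : p i ∣ q := Int.natCast_dvd_natCast.mp h
      exact hpq i ((Nat.prime_dvd_prime_iff_eq (hp i) hq).mp this)
    · exact hy' (hprime.dvd_of_dvd_pow h)
  -- Jacobi symbols of 2 and -1
  have hJ2 : jacobiSym 2 (∏ i, p i) = 1 := by
    rw [jacobi_prod _ _ _ fun i _ => hpne i]
    have hval : ∀ i, jacobiSym 2 (p i) = -1 := by
      intro i
      rw [jacobiSym.at_two (Nat.odd_iff.mpr (hpodd i))]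
      have h8 : ((p i : ℕ) : ZMod 8) = 5 := by
        rw [← ZMod.natCast_mod, hp5 i]; rfl
      rw [h8]; decide
    rw [Finset.prod_congr rfl fun i _ => hval i, Finset.prod_const, Finset.card_univ,
      Fintype.card_fin]
    exact Even.neg_one_pow ht
  have hJneg : jacobiSym (-1) (∏ i, p i) = 1 := by
    rw [jacobiSym.at_neg_one hPodd]
    have h4 : ((∏ i, p i : ℕ) : ZMod 4) = 1 := by
      rw [← ZMod.natCast_mod, hP4]; rfl
    rw [h4]; decide
  -- decompose |y| = 2^e * m with m odd
  set n : ℕ := y.natAbs with hn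
  have hn0 : n ≠ 0 := Int.natAbs_ne_zero.mpr hy
  set e : ℕ := n.factorization 2 with he
  set m : ℕ := n / 2 ^ e with hm
  have hem : 2 ^ e * m = n := Nat.ordProj_mul_ordCompl_eq_self n 2
  have hmnd : ¬ 2 ∣ m := Nat.not_dvd_ordCompl Nat.prime_two hn0
  have hmodd : Odd m := Nat.odd_iff.mpr (Nat.two_dvd_ne_zero.mp hmnd)
  have hm0 : m ≠ 0 := by intro h0; rw [h0, mul_zero] at hem; exact hn0 hem.symm
  have hdvd_y : (m : ℤ) ∣ y := by
    refine dvd_trans ?_ (Int.natAbs_dvd.mpr dvd_rfl)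
    exact Int.natCast_dvd_natCast.mpr (Dvd.intro_left _ hem)
  -- coprimality of z, w with m
  have hcop_zw : ∀ v : ℤ, (v = z ∨ v = w) → Int.gcd v m = 1 := by
    intro v hv
    by_contra hne
    obtain ⟨r, hr, hrg⟩ := Nat.exists_prime_and_dvd hne
    have hrv : (r : ℤ) ∣ v :=
      dvd_trans (Int.natCast_dvd_natCast.mpr hrg) (Int.gcd_dvd_left _ _)
    have hry : (r : ℤ) ∣ y :=
      dvd_trans (dvd_trans (Int.natCast_dvd_natCast.mpr hrg) (Int.gcd_dvd_right _ _)) hdvd_y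
    have hprime : Prime ((r : ℕ) : ℤ) := Nat.prime_iff_prime_int.mp hr
    have hrx2 : (r : ℤ) ∣ x ^ 2 := by
      rcases hv with rfl | rfl
      · have hx2eq : x ^ 2 = (∏ i ∈ Sᶜ, (p i : ℤ)) * v ^ 2 - (q : ℤ) * y ^ 2 := by linarith
        rw [hx2eq]
        exact dvd_sub (Dvd.dvd.mul_left (dvd_pow hrv two_ne_zero) _)
          (Dvd.dvd.mul_left (dvd_pow hry two_ne_zero) _)
      · have hx2eq : x ^ 2 = (∏ i ∈ S, (p i : ℤ)) * v ^ 2 + (q : ℤ) * y ^ 2 := by linarith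
        rw [hx2eq]
        exact dvd_add (Dvd.dvd.mul_left (dvd_pow hrv two_ne_zero) _)
          (Dvd.dvd.mul_left (dvd_pow hry two_ne_zero) _)
    have hrx : (r : ℤ) ∣ x := hprime.dvd_of_dvd_pow hrx2
    have h3 : (r : ℤ) ∣ (Int.gcd x y : ℤ) := Int.dvd_coe_gcd hrx hry
    rw [hgcd] at h3
    have h4 : (r : ℤ) ≤ 1 := Int.le_of_dvd one_pos h3
    have := hr.two_le
    omega
  -- coprimality of subproducts with m
  have hcop_P : ∀ T : Finset (Fin t), Int.gcd ((∏ i ∈ T, p i : ℕ) : ℤ) m = 1 := by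
    intro T
    by_contra hne
    obtain ⟨r, hr, hrg⟩ := Nat.exists_prime_and_dvd hne
    have hrP : r ∣ ∏ i ∈ T, p i := by
      have : (r : ℤ) ∣ ((∏ i ∈ T, p i : ℕ) : ℤ) :=
        dvd_trans (Int.natCast_dvd_natCast.mpr hrg) (Int.gcd_dvd_left _ _)
      exact_mod_cast this
    obtain ⟨i, hiT, hri⟩ := hr.prime.exists_mem_finset_dvd hrP
    have hreq : r = p i := ((Nat.prime_dvd_prime_iff_eq hr (hp i)).mp hri)
    have hry : (p i : ℤ) ∣ y := by
      refine dvd_trans ?_ hdvd_y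
      rw [← hreq]
      exact dvd_trans (Int.natCast_dvd_natCast.mpr hrg) (Int.gcd_dvd_right _ _)
    exact (hnd i).2 hry
  -- the congruence modulo m
  have hmodm : jacobiSym ((∏ i ∈ S, p i : ℕ) : ℤ) m = jacobiSym ((∏ i ∈ Sᶜ, p i : ℕ) : ℤ) m := by
    have hd : (m : ℤ) ∣ ((∏ i ∈ Sᶜ, (p i : ℤ)) * z ^ 2 - (∏ i ∈ S, (p i : ℤ)) * w ^ 2) := by
      have heqd : (∏ i ∈ Sᶜ, (p i : ℤ)) * z ^ 2 - (∏ i ∈ S, (p i : ℤ)) * w ^ 2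
          = 2 * (q : ℤ) * y ^ 2 := by linarith
      rw [heqd]
      exact Dvd.dvd.mul_left (dvd_pow hdvd_y two_ne_zero) _
    have hmod : jacobiSym ((∏ i ∈ S, (p i : ℤ)) * w ^ 2) m
        = jacobiSym ((∏ i ∈ Sᶜ, (p i : ℤ)) * z ^ 2) m :=
      jacobiSym.mod_left' (Int.modEq_iff_dvd.mpr hd)
    rw [jacobiSym.mul_left, jacobiSym.mul_left] at hmod
    have hw2 : jacobiSym (w ^ 2) m = 1 := jacobiSym.sq_one' (hcop_zw w (Or.inr rfl))
    have hz2 : jacobiSym (z ^ 2) m = 1 := jacobiSym.sq_one' (hcop_zw z (Or.inl rfl))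
    rw [hw2, hz2, mul_one, mul_one] at hmod
    have hcastS : (∏ i ∈ S, (p i : ℤ)) = ((∏ i ∈ S, p i : ℕ) : ℤ) := by push_cast; rfl
    have hcastSc : (∏ i ∈ Sᶜ, (p i : ℤ)) = ((∏ i ∈ Sᶜ, p i : ℕ) : ℤ) := by push_cast; rfl
    rw [hcastS, hcastSc] at hmod
    exact hmod
  -- J(P | m) = 1
  have hPm : jacobiSym ((∏ i, p i : ℕ) : ℤ) m = 1 := by
    have hsplit : (∏ i, p i : ℕ) = (∏ i ∈ S, p i) * ∏ i ∈ Sᶜ, p i :=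
      (Finset.prod_mul_prod_compl S p).symm
    rw [hsplit, Nat.cast_mul, jacobiSym.mul_left, ← hmodm, ← pow_two]
    exact jacobiSym.sq_one (hcop_P S)
  -- Part A : J(y | P) = 1
  have hmP : jacobiSym (m : ℤ) (∏ i, p i) = 1 := by
    rw [← jacobiSym.quadratic_reciprocity_one_mod_four hP4 hmodd]
    exact hPm
  have partA : jacobiSym y (∏ i, p i) = 1 := by
    have hyval : y = y.sign * (n : ℤ) := (Int.sign_mul_natAbs y).symm
    have hnval : (n : ℤ) = 2 ^ e * (m : ℤ) := by exact_mod_cast congrArg (Nat.cast : ℕ → ℤ) hem.symm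
    rw [hyval, jacobiSym.mul_left, hnval, jacobiSym.mul_left]
    have h2e : jacobiSym ((2 : ℤ) ^ e) (∏ i, p i) = 1 := by
      rw [jacobiSym.pow_left, hJ2, one_pow]
    rw [h2e, hmP]
    rcases lt_or_gt_of_ne hy with hs | hs
    · rw [Int.sign_eq_neg_one_of_neg hs]; simp [hJneg]
    · rw [Int.sign_eq_one_of_pos hs]; simp
  refine ⟨partA, ?_⟩
  -- Part B
  haveI instF : ∀ i, Fact (Nat.Prime (p i)) := fun i => Fact.mk (hp i)
  have hyprod : (∏ i, legendreSym (p i) y) = 1 := by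
    rw [show (∏ i, legendreSym (p i) y) = jacobiSym y (∏ i, p i) by
      rw [jacobi_prod y _ _ fun i _ => hpne i]
      exact Finset.prod_congr rfl fun i _ => jacobiSym.legendreSym.to_jacobiSym (p i) y]
    exact partA
  have hxprod : (∏ i, legendreSym (p i) x) = jacobiSym x (∏ i, p i) := by
    rw [jacobi_prod x _ _ fun i _ => hpne i]
    exact Finset.prod_congr rfl fun i _ => jacobiSym.legendreSym.to_jacobiSym (p i) x
  have hLpm : ∀ i, legendreSym (p i) x * legendreSym (p i) y = 1 ∨
      legendreSym (p i) x * legendreSym (p i) y = -1 := by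
    intro i
    haveI := Fact.mk (hp i)
    have hx0 : ((x : ℤ) : ZMod (p i)) ≠ 0 := by
      rw [Ne, ZMod.intCast_zmod_eq_zero_iff_dvd]; exact (hnd i).1
    have hy0 : ((y : ℤ) : ZMod (p i)) ≠ 0 := by
      rw [Ne, ZMod.intCast_zmod_eq_zero_iff_dvd]; exact (hnd i).2
    rcases legendreSym.eq_one_or_neg_one (p i) hx0 with h1 | h1 <;>
      rcases legendreSym.eq_one_or_neg_one (p i) hy0 with h2 | h2 <;>
      simp [h1, h2]
  have hforS : ∀ i ∈ S, quarticSym q (p i) = legendreSym (p i) x * legendreSym (p i) y := by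
    intro i hi
    haveI := Fact.mk (hp i)
    have hzm8 : ((x : ℤ) : ZMod (p i)) ^ 2 = ((q : ℤ) : ZMod (p i)) * ((y : ℤ) : ZMod (p i)) ^ 2 := by
      have hc := congrArg (fun u : ℤ => (u : ZMod (p i))) heq2
      push_cast at hc
      rw [Finset.prod_eq_zero hi (by exact_mod_cast ZMod.natCast_self (p i)), zero_mul] at hc
      push_cast
      linear_combination hc
    have he := pow_quarter (hp5 i) q x y (hnd i).2 hzm8
    exact quarticSym_eq (hp i) (hp2' i) (hLpm i) (by exact_mod_cast he)
  have hforSc : ∀ i ∈ Sᶜ, quarticSym q (p i) =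
      -(legendreSym (p i) x * legendreSym (p i) y) := by
    intro i hi
    haveI := Fact.mk (hp i)
    have hzm8 : ((x : ℤ) : ZMod (p i)) ^ 2 =
        (((-q : ℤ)) : ZMod (p i)) * ((y : ℤ) : ZMod (p i)) ^ 2 := by
      have hc := congrArg (fun u : ℤ => (u : ZMod (p i))) heq1
      push_cast at hc
      rw [Finset.prod_eq_zero hi (by exact_mod_cast ZMod.natCast_self (p i)), zero_mul] at hc
      push_cast
      linear_combination hc
    have he := pow_quarter (hp5 i) (-q) x y (hnd i).2 hzm8
    have hoddn : Odd ((p i - 1) / 4) := by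
      have := hp5 i
      exact Nat.odd_iff.mpr (by omega)
    have he' : ((q : ℤ) : ZMod (p i)) ^ ((p i - 1) / 4) =
        ((-(legendreSym (p i) x * legendreSym (p i) y) : ℤ) : ZMod (p i)) := by
      have hneg : (((-q : ℤ)) : ZMod (p i)) ^ ((p i - 1) / 4) =
          -((q : ℤ) : ZMod (p i)) ^ ((p i - 1) / 4) := by
        push_cast
        rw [hoddn.neg_pow]
      rw [hneg] at he
      push_cast at he ⊢
      linear_combination -he
    have hepm : -(legendreSym (p i) x * legendreSym (p i) y) = 1 ∨
        -(legendreSym (p i) x * legendreSym (p i) y) = -1 := by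
      rcases hLpm i with h | h <;> simp [h]
    exact quarticSym_eq (hp i) (hp2' i) hepm he'
  -- assemble
  have hSodd : ∀ i ∈ S, (-1 : ℤ) ^ ((p i - 1) / 4) = -1 := by
    intro i _
    have hoddn : Odd ((p i - 1) / 4) := by
      have := hp5 i
      exact Nat.odd_iff.mpr (by omega)
    exact hoddn.neg_one_pow
  have hRHS : (∏ i ∈ S, (-1 : ℤ) ^ ((p i - 1) / 4)) = (-1) ^ S.card := by
    rw [Finset.prod_congr rfl hSodd, Finset.prod_const]
  have hLHS : (∏ i, quarticSym q (p i)) =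
      (-1) ^ Sᶜ.card * ((∏ i, legendreSym (p i) x) * ∏ i, legendreSym (p i) y) := by
    have hneg : (∏ i ∈ Sᶜ, -(legendreSym (p i) x * legendreSym (p i) y)) =
        (-1) ^ Sᶜ.card * ∏ i ∈ Sᶜ, legendreSym (p i) x * legendreSym (p i) y := by
      rw [Finset.prod_congr rfl (fun i _ => (neg_eq_neg_one_mul
        (legendreSym (p i) x * legendreSym (p i) y) : _)),
        Finset.prod_mul_distrib, Finset.prod_const]
    calc (∏ i, quarticSym q (p i))
        = (∏ i ∈ S, quarticSym q (p i)) * ∏ i ∈ Sᶜ, quarticSym q (p i) :=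
          (Finset.prod_mul_prod_compl S _).symm
      _ = (∏ i ∈ S, legendreSym (p i) x * legendreSym (p i) y) *
            ((-1) ^ Sᶜ.card * ∏ i ∈ Sᶜ, legendreSym (p i) x * legendreSym (p i) y) := by
          rw [Finset.prod_congr rfl hforS, Finset.prod_congr rfl hforSc, hneg]
      _ = (-1) ^ Sᶜ.card * ((∏ i ∈ S, legendreSym (p i) x * legendreSym (p i) y) *
            ∏ i ∈ Sᶜ, legendreSym (p i) x * legendreSym (p i) y) := by ring
      _ = (-1) ^ Sᶜ.card * ∏ i, legendreSym (p i) x * legendreSym (p i) y := by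
          rw [Finset.prod_mul_prod_compl S _]
      _ = (-1) ^ Sᶜ.card * ((∏ i, legendreSym (p i) x) * ∏ i, legendreSym (p i) y) := by
          rw [Finset.prod_mul_distrib]
  have hcard : S.card + Sᶜ.card = t := by
    rw [Finset.card_add_card_compl]
    simp
  have hsign : ((-1 : ℤ)) ^ Sᶜ.card = (-1) ^ S.card := by
    rcases Nat.even_or_odd S.card with hev | hod
    · have hev' : Even Sᶜ.card := by
        rcases ht with ⟨k, hk⟩; rcases hev with ⟨j, hj⟩
        exact ⟨k - j, by omega⟩
      rw [hev'.neg_one_pow, hev.neg_one_pow]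
    · have hod' : Odd Sᶜ.card := by
        rcases ht with ⟨k, hk⟩; rcases hod with ⟨j, hj⟩
        exact ⟨k - j - 1, by omega⟩
      rw [hod'.neg_one_pow, hod.neg_one_pow]
  rw [hLHS, hRHS, hsign, hyprod, hxprod, mul_one]
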